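/- Let t₀ < t₁ and let u, v : ℝ → ℝ be continuous on [t₀,t₁]. Then the following are equivalent: (i) u(x) = u(t₀) + ∫_{t₀}^{x} v(t) dt for every x ∈ [t₀,t₁]; (ii) for every continuously differentiable φ : ℝ×ℝ → ℝ, ∫_{t₀}^{t₁} (∂φ/∂x(t, u(t)) + ∂φ/∂y(t, u(t))·v(t)) dt = φ(t₁, u(t₁)) − φ(t₀, u(t₀)). -/

import Mathlib

open Real MeasureTheory Set

-- slice derivatives of a C¹ function are the fderiv applied to basis directions
lemma slice1 {φ : ℝ → ℝ → ℝ} (hφ : ContDiff ℝ 1 (fun p : ℝ × ℝ => φ p.1 p.2))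
    (x y : ℝ) :
    HasDerivAt (fun s => φ s y) (fderiv ℝ (fun p : ℝ × ℝ => φ p.1 p.2) (x, y) (1, 0)) x := by
  have hF : HasFDerivAt (fun p : ℝ × ℝ => φ p.1 p.2)
      (fderiv ℝ (fun p : ℝ × ℝ => φ p.1 p.2) (x, y)) (x, y) :=
    (hφ.differentiable one_ne_zero (x, y)).hasFDerivAt
  have hin : HasDerivAt (fun s : ℝ => (s, y)) ((1 : ℝ), (0 : ℝ)) x := by
    simpa using (hasDerivAt_id x).prodMk (hasDerivAt_const x y)
  exact hF.comp_hasDerivAt x hin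

lemma slice2 {φ : ℝ → ℝ → ℝ} (hφ : ContDiff ℝ 1 (fun p : ℝ × ℝ => φ p.1 p.2))
    (x y : ℝ) :
    HasDerivAt (fun r => φ x r) (fderiv ℝ (fun p : ℝ × ℝ => φ p.1 p.2) (x, y) (0, 1)) y := by
  have hF : HasFDerivAt (fun p : ℝ × ℝ => φ p.1 p.2)
      (fderiv ℝ (fun p : ℝ × ℝ => φ p.1 p.2) (x, y)) (x, y) :=
    (hφ.differentiable one_ne_zero (x, y)).hasFDerivAt
  have hin : HasDerivAt (fun r : ℝ => (x, r)) ((0 : ℝ), (1 : ℝ)) y := by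
    simpa using (hasDerivAt_const y x).prodMk (hasDerivAt_id y)
  exact hF.comp_hasDerivAt y hin

-- forward direction as a standalone lemma
lemma fwd (t₀ t₁ : ℝ) (ht : t₀ < t₁) (u v : ℝ → ℝ)
    (hu : ContinuousOn u (Icc t₀ t₁)) (hv : ContinuousOn v (Icc t₀ t₁))
    (h : ∀ x ∈ Icc t₀ t₁, u x = u t₀ + ∫ t in t₀..x, v t)
    (φ : ℝ → ℝ → ℝ) (hφ : ContDiff ℝ 1 (fun p : ℝ × ℝ => φ p.1 p.2)) :
    (∫ t in t₀..t₁, (deriv (fun s => φ s (u t)) t + deriv (fun r => φ t r) (u t) * v t))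
      = φ t₁ (u t₁) - φ t₀ (u t₀) := by
  set Φ : ℝ × ℝ → ℝ := fun p => φ p.1 p.2 with hΦ
  have hfderiv_cont : Continuous (fun p : ℝ × ℝ => fderiv ℝ Φ p) :=
    hφ.continuous_fderiv one_ne_zero
  -- rewrite the integrand
  have hrw : ∀ t ∈ Icc t₀ t₁,
      (deriv (fun s => φ s (u t)) t + deriv (fun r => φ t r) (u t) * v t)
      = fderiv ℝ Φ (t, u t) (1, 0) + fderiv ℝ Φ (t, u t) (0, 1) * v t := by
    intro t _
    rw [(slice1 hφ t (u t)).deriv, (slice2 hφ t (u t)).deriv]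
  -- continuity of helpers
  have hmap : ContinuousOn (fun t => (t, u t)) (Icc t₀ t₁) :=
    continuousOn_id.prodMk hu
  have hcontInt : ContinuousOn
      (fun t => fderiv ℝ Φ (t, u t) (1, 0) + fderiv ℝ Φ (t, u t) (0, 1) * v t)
      (Icc t₀ t₁) := by
    have h1 : ContinuousOn (fun t => fderiv ℝ Φ (t, u t)) (Icc t₀ t₁) :=
      hfderiv_cont.comp_continuousOn hmap
    exact ((h1.clm_apply continuousOn_const).add
      ((h1.clm_apply continuousOn_const).mul hv))
  -- u has derivative v on Ioo
  have hderivu : ∀ t ∈ Ioo t₀ t₁, HasDerivAt u (v t) t := by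
    intro t htI
    have htIcc : t ∈ Icc t₀ t₁ := Ioo_subset_Icc_self htI
    have hint : IntervalIntegrable v volume t₀ t := by
      apply (hv.mono (by rw [uIcc_of_le htIcc.1]; exact Icc_subset_Icc le_rfl htIcc.2)).intervalIntegrable
    have hmeas : StronglyMeasurableAtFilter v (nhds t) volume :=
      (hv.mono Ioo_subset_Icc_self).stronglyMeasurableAtFilter isOpen_Ioo t htI
    have hcn : ContinuousAt v t :=
      (hv t htIcc).continuousAt (Icc_mem_nhds htI.1 htI.2)
    have hw : HasDerivAt (fun x => u t₀ + ∫ s in t₀..x, v s) (v t) t :=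
      ((intervalIntegral.integral_hasDerivAt_right hint hmeas hcn).const_add (u t₀))
    apply hw.congr_of_eventuallyEq
    filter_upwards [Ioo_mem_nhds htI.1 htI.2] with x hx
    exact h x (Ioo_subset_Icc_self hx)
  -- FTC
  have hFcont : ContinuousOn (fun t => φ t (u t)) (Icc t₀ t₁) :=
    (hφ.continuous.comp_continuousOn hmap)
  have key : ∀ t ∈ Ioo t₀ t₁,
      HasDerivAt (fun t => φ t (u t))
        (fderiv ℝ Φ (t, u t) (1, 0) + fderiv ℝ Φ (t, u t) (0, 1) * v t) t := by
    intro t htI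
    have hF : HasFDerivAt Φ (fderiv ℝ Φ (t, u t)) (t, u t) :=
      (hφ.differentiable one_ne_zero (t, u t)).hasFDerivAt
    have hin : HasDerivAt (fun s => (s, u s)) ((1 : ℝ), v t) t :=
      (hasDerivAt_id t).prodMk (hderivu t htI)
    have := hF.comp_hasDerivAt t hin
    have heq : fderiv ℝ Φ (t, u t) (1, v t)
        = fderiv ℝ Φ (t, u t) (1, 0) + fderiv ℝ Φ (t, u t) (0, 1) * v t := by
      have : ((1 : ℝ), v t) = (1, 0) + v t • ((0 : ℝ), (1 : ℝ)) := by
        simp [Prod.ext_iff]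
      rw [this, (fderiv ℝ Φ (t, u t)).map_add, (fderiv ℝ Φ (t, u t)).map_smul]
      simp [smul_eq_mul, mul_comm]
    rw [heq] at this
    exact this
  have hint2 : IntervalIntegrable
      (fun t => fderiv ℝ Φ (t, u t) (1, 0) + fderiv ℝ Φ (t, u t) (0, 1) * v t) volume t₀ t₁ :=
    (hcontInt.mono (by rw [uIcc_of_le ht.le])).intervalIntegrable
  have hres := intervalIntegral.integral_eq_sub_of_hasDerivAt_of_le ht.le hFcont key hint2
  rw [intervalIntegral.integral_congr (g := fun t => fderiv ℝ Φ (t, u t) (1, 0) + fderiv ℝ Φ (t, u t) (0, 1) * v t) ?_]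
  · exact hres
  · intro t htI
    rw [uIcc_of_le ht.le] at htI
    exact hrw t htI

theorem stmt_14
    (t₀ t₁ : ℝ) (ht : t₀ < t₁)
    (u v : ℝ → ℝ)
    (hu : ContinuousOn u (Icc t₀ t₁)) (hv : ContinuousOn v (Icc t₀ t₁)) :
    (∀ x ∈ Icc t₀ t₁, u x = u t₀ + ∫ t in t₀..x, v t)
    ↔ ∀ φ : ℝ → ℝ → ℝ, ContDiff ℝ 1 (fun p : ℝ × ℝ => φ p.1 p.2) →
        (∫ t in t₀..t₁, (deriv (fun s => φ s (u t)) t + deriv (fun r => φ t r) (u t) * v t))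
          = φ t₁ (u t₁) - φ t₀ (u t₀) := by
  constructor
  · exact fun h φ hφ => fwd t₀ t₁ ht u v hu hv h φ hφ
  · intro H
    set w : ℝ → ℝ := fun x => u t₀ + ∫ t in t₀..x, v t with hwdef
    have hvuint : IntegrableOn v (uIcc t₀ t₁) volume := by
      rw [uIcc_of_le ht.le]
      exact hv.integrableOn_compact isCompact_Icc
    have hwcont : ContinuousOn w (Icc t₀ t₁) := by
      have h2 : ContinuousOn (fun x => u t₀ + ∫ t in t₀..x, v t) (uIcc t₀ t₁) :=
        continuousOn_const.add (intervalIntegral.continuousOn_primitive_interval hvuint)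
      rwa [uIcc_of_le ht.le] at h2
    have hwprop : ∀ x ∈ Icc t₀ t₁, w x = w t₀ + ∫ t in t₀..x, v t := by
      intro x hx
      simp [hwdef]
    have hFw := fwd t₀ t₁ ht w v hwcont hv hwprop
    -- u and w agree at endpoints
    have hw0 : w t₀ = u t₀ := by simp [hwdef]
    have hintv : ∫ t in t₀..t₁, v t = u t₁ - u t₀ := by
      have := H (fun _ y => y) contDiff_snd
      simpa using this
    have hw1 : w t₁ = u t₁ := by
      rw [hwdef]; simp [hintv]
    -- key orthogonality: for all continuous η, ∫ (u - w) η = 0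
    have horth : ∀ η : ℝ → ℝ, Continuous η →
        ∫ t in t₀..t₁, (u t - w t) * η t = 0 := by
      intro η hη
      set ψ : ℝ → ℝ := fun x => ∫ s in t₀..x, η s with hψdef
      have hψd : ∀ x, HasDerivAt ψ (η x) x := by
        intro x
        exact intervalIntegral.integral_hasDerivAt_right
          (hη.intervalIntegrable t₀ x)
          (hη.stronglyMeasurable.stronglyMeasurableAtFilter)
          hη.continuousAt
      have hψ : ContDiff ℝ 1 ψ := by
        rw [contDiff_one_iff_deriv]
        refine ⟨fun x => (hψd x).differentiableAt, ?_⟩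
        have : deriv ψ = η := funext fun x => (hψd x).deriv
        rw [this]; exact hη
      set φ : ℝ → ℝ → ℝ := fun x y => y * ψ x with hφdef
      have hφ : ContDiff ℝ 1 (fun p : ℝ × ℝ => φ p.1 p.2) :=
        contDiff_snd.mul (hψ.comp contDiff_fst)
      have hd1 : ∀ f : ℝ → ℝ, ∀ t, deriv (fun s => φ s (f t)) t = f t * η t := by
        intro f t
        exact (((hψd t).const_mul (f t))).deriv
      have hd2 : ∀ f : ℝ → ℝ, ∀ t, deriv (fun r => φ t r) (f t) = ψ t := by
        intro f t
        exact (hasDerivAt_mul_const (ψ t)).deriv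
      have hu' := H φ hφ
      have hw' := hFw φ hφ
      simp only [hd1, hd2] at hu' hw'
      have hiu : IntervalIntegrable (fun t => u t * η t + ψ t * v t) volume t₀ t₁ := by
        apply ContinuousOn.intervalIntegrable
        rw [uIcc_of_le ht.le]
        exact (hu.mul hη.continuousOn).add ((hψ.continuous.continuousOn).mul hv)
      have hiw : IntervalIntegrable (fun t => w t * η t + ψ t * v t) volume t₀ t₁ := by
        apply ContinuousOn.intervalIntegrable
        rw [uIcc_of_le ht.le]
        exact (hwcont.mul hη.continuousOn).add ((hψ.continuous.continuousOn).mul hv)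
      have hsub := intervalIntegral.integral_sub hiu hiw
      have : ∫ t in t₀..t₁, ((u t * η t + ψ t * v t) - (w t * η t + ψ t * v t)) = 0 := by
        rw [hsub, hu', hw', hw0, hw1]
        ring
      rw [← this]
      apply intervalIntegral.integral_congr
      intro t _
      ring
    -- take η to be the continuous extension of u - w
    set η : ℝ → ℝ := IccExtend ht.le (fun p : Icc t₀ t₁ => u p - w p) with hηdef
    have hηeq : ∀ x ∈ Icc t₀ t₁, η x = u x - w x := by
      intro x hx
      rw [hηdef, IccExtend_of_mem _ _ hx]
    have hηcont : Continuous η := by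
      apply Continuous.Icc_extend'
      exact (hu.sub hwcont).restrict
    have hzero := horth η hηcont
    have hsq : ∫ t in t₀..t₁, (η t) ^ 2 = 0 := by
      rw [← hzero]
      apply intervalIntegral.integral_congr
      intro t htI
      rw [uIcc_of_le ht.le] at htI
      simp only []
      rw [hηeq t htI]; ring
    have hae : (fun t => (η t) ^ 2) =ᵐ[volume.restrict (Ioc t₀ t₁)] 0 := by
      rw [← intervalIntegral.integral_eq_zero_iff_of_le_of_nonneg_ae ht.le
        (Filter.Eventually.of_forall fun t => sq_nonneg _)
        ((hηcont.pow 2).intervalIntegrable t₀ t₁)]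
      exact hsq
    have heqz : ∀ x ∈ Ioc t₀ t₁, (η x) ^ 2 = (0 : ℝ → ℝ) x :=
      MeasureTheory.Measure.eqOn_Ioc_of_ae_eq (μ := volume) hae
        ((hηcont.pow 2).continuousOn) continuousOn_const
    intro x hx
    rcases eq_or_lt_of_le hx.1 with h0 | h0
    · simp [← h0]
    · have hx2 : x ∈ Ioc t₀ t₁ := ⟨h0, hx.2⟩
      have : η x = 0 := by
        have := heqz x hx2
        exact pow_eq_zero_iff (n := 2) (by norm_num) |>.mp (by simpa using this)
      have := hηeq x hx
      rw [this] at *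
      have : u x - w x = 0 := by rw [← hηeq x hx]; exact ‹η x = 0›
      have := sub_eq_zero.mp this
      simpa [hwdef] using this
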